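/- For a probability distribution P on a finite set X and α ∈ (1, 1 + ln 3/(4·ln η)) where η = 2^{−H_{3/2}(X)/2} + 2^{H_{1/2}(X)/2} + 1, the Rényi entropy satisfies H_α(X) ≥ H(X) − 4(α−1)·(log₂ η)², where H is the Shannon entropy. -/

import Mathlib

open Real Finset

lemma exp_le_quad {u : ℝ} (hu : u ≤ 0) : Real.exp u ≤ 1 + u + u^2/2 := by
  have hs : (0:ℝ) ≤ -u := by linarith
  have h1 : 1 + (-u) + (-u)^2/2 ≤ Real.exp (-u) := by
    have := Real.sum_le_exp_of_nonneg hs 3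
    simp [Finset.sum_range_succ, Nat.factorial] at this
    nlinarith [this]
  have h2 : Real.exp u * Real.exp (-u) = 1 := by rw [← Real.exp_add]; simp
  nlinarith [Real.exp_pos u, Real.exp_pos (-u), sq_nonneg u, sq_nonneg (u*u)]

lemma concave_log_sq : ConcaveOn ℝ (Set.Ici (Real.exp 1)) (fun x => Real.log x ^ 2) := by
  have hint : interior (Set.Ici (Real.exp 1)) = Set.Ioi (Real.exp 1) := interior_Ici
  apply concaveOn_of_hasDerivWithinAt2_nonpos (f' := fun x => 2 * Real.log x / x)
    (f'' := fun x => (2 - 2 * Real.log x) / x^2) (convex_Ici _)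
  · exact (continuous_pow 2).comp_continuousOn
      (Real.continuousOn_log.mono (by intro x hx; simp at hx ⊢; nlinarith [Real.exp_pos 1]))
  · intro x hx
    rw [hint] at hx
    have hx0 : 0 < x := lt_trans (Real.exp_pos 1) hx
    have := ((Real.hasDerivAt_log hx0.ne').pow 2)
    convert this.hasDerivWithinAt using 1
    · rfl
    · rfl
    · rfl
    · field_simp
      norm_num
  · intro x hx
    rw [hint] at hx
    have hx0 : 0 < x := lt_trans (Real.exp_pos 1) hx
    have h1 : HasDerivAt (fun x => 2 * Real.log x / x)
        ((2 * x⁻¹ * x - 2 * Real.log x * 1) / x^2) x := by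
      exact (((Real.hasDerivAt_log hx0.ne').const_mul 2).div (hasDerivAt_id x) hx0.ne')
    convert h1.hasDerivWithinAt using 1
    · rfl
    · rfl
    · field_simp
  · intro x hx
    rw [hint] at hx
    have hx0 : 0 < x := lt_trans (Real.exp_pos 1) hx
    have hlog : 1 ≤ Real.log x := by
      rw [Real.le_log_iff_exp_le hx0]; exact le_of_lt hx
    apply div_nonpos_of_nonpos_of_nonneg
    · linarith
    · positivity

set_option maxHeartbeats 1000000 in
theorem renyi_entropy_lower_bound {X : Type*} [Fintype X] [Nonempty X]
    (P : X → NNReal) (hP : ∑ x, P x = 1) (hpos : ∀ x, 0 < P x)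
    (η : ℝ)
    (hη : η = (2 : ℝ) ^
        (-((1 / (1 - (3 / 2 : ℝ))) * Real.logb 2 (∑ x, (P x : ℝ) ^ (3 / 2 : ℝ))) / 2)
      + (2 : ℝ) ^
        (((1 / (1 - (1 / 2 : ℝ))) * Real.logb 2 (∑ x, (P x : ℝ) ^ (1 / 2 : ℝ))) / 2) + 1)
    (α : ℝ) (hα : 1 < α) (hα' : α < 1 + Real.log 3 / (4 * Real.log η)) :
    (1 / (1 - α)) * Real.logb 2 (∑ x, (P x : ℝ) ^ α) ≥
      (- ∑ x, (P x : ℝ) * Real.logb 2 (P x : ℝ)) - 4 * (α - 1) * (Real.logb 2 η) ^ 2 := by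
  have hp : ∀ x, (0:ℝ) < (P x : ℝ) := fun x => NNReal.coe_pos.mpr (hpos x)
  have hsum1 : ∑ x, (P x : ℝ) = 1 := by rw [← NNReal.coe_sum, hP, NNReal.coe_one]
  have hple : ∀ x, (P x : ℝ) ≤ 1 := by
    intro x
    rw [← hsum1]
    exact Finset.single_le_sum (fun y _ => (hp y).le) (mem_univ x)
  set S3 := ∑ x, (P x : ℝ) ^ (3/2 : ℝ) with hS3def
  set S1 := ∑ x, (P x : ℝ) ^ (1/2 : ℝ) with hS1def
  set Sa := ∑ x, (P x : ℝ) ^ α with hSadef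
  have hS3 : 0 < S3 := Finset.sum_pos (fun x _ => Real.rpow_pos_of_pos (hp x) _) univ_nonempty
  have hS1 : 0 < S1 := Finset.sum_pos (fun x _ => Real.rpow_pos_of_pos (hp x) _) univ_nonempty
  have hSa : 0 < Sa := Finset.sum_pos (fun x _ => Real.rpow_pos_of_pos (hp x) _) univ_nonempty
  have hη' : η = S3 + S1 + 1 := by
    have e3 : -((1 / (1 - (3/2:ℝ))) * Real.logb 2 S3) / 2 = Real.logb 2 S3 := by norm_num
    have e1 : ((1 / (1 - (1/2:ℝ))) * Real.logb 2 S1) / 2 = Real.logb 2 S1 := by norm_num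
    rw [hη, e3, e1, Real.rpow_logb two_pos (by norm_num) hS3,
      Real.rpow_logb two_pos (by norm_num) hS1]
  set t := α - 1 with htdef
  have ht : 0 < t := by simp only [htdef]; linarith
  set A := ∑ x, (P x : ℝ) * Real.log (P x) with hAdef
  set W := ∑ x, (P x : ℝ) * (Real.log (P x))^2 with hWdef
  -- the weighted-sum representation of η
  set v : X → ℝ := fun x => (P x : ℝ) ^ (1/2:ℝ) + ((P x : ℝ) ^ (1/2:ℝ))⁻¹ + 1 with hvdef
  have hv3 : ∀ x, (3:ℝ) ≤ v x := by
    intro x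
    have ha : 0 < (P x : ℝ) ^ (1/2:ℝ) := Real.rpow_pos_of_pos (hp x) _
    have : (P x : ℝ) ^ (1/2:ℝ) + ((P x : ℝ) ^ (1/2:ℝ))⁻¹ ≥ 2 := by
      rw [ge_iff_le, ← sub_nonneg]
      have key : ((P x : ℝ) ^ (1/2:ℝ) + ((P x : ℝ) ^ (1/2:ℝ))⁻¹ - 2) * ((P x : ℝ) ^ (1/2:ℝ))
          = ((P x : ℝ) ^ (1/2:ℝ) - 1)^2 := by
        field_simp
        ring
      nlinarith [sq_nonneg ((P x : ℝ) ^ (1/2:ℝ) - 1), ha]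
    simp only [hvdef]
    linarith
  have hpv : ∑ x, (P x : ℝ) * v x = η := by
    rw [hη']
    have : ∀ x, (P x : ℝ) * v x
        = (P x : ℝ) ^ (3/2:ℝ) + (P x : ℝ) ^ (1/2:ℝ) + (P x : ℝ) := by
      intro x
      have hx := hp x
      have h1 : (P x : ℝ) * (P x : ℝ) ^ (1/2:ℝ) = (P x : ℝ) ^ (3/2:ℝ) := by
        nth_rewrite 1 [← Real.rpow_one (P x : ℝ)]
        rw [← Real.rpow_add hx]
        norm_num
      have h2 : (P x : ℝ) * ((P x : ℝ) ^ (1/2:ℝ))⁻¹ = (P x : ℝ) ^ (1/2:ℝ) := by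
        rw [← Real.rpow_neg hx.le]
        nth_rewrite 1 [← Real.rpow_one (P x : ℝ)]
        rw [← Real.rpow_add hx]
        norm_num
      simp only [hvdef]
      rw [mul_add, mul_add, h1, h2, mul_one]
    rw [Finset.sum_congr rfl (fun x _ => this x), Finset.sum_add_distrib,
      Finset.sum_add_distrib, hsum1]
  -- Jensen's inequality step
  have hvmem : ∀ x : X, v x ∈ Set.Ici (Real.exp 1) := by
    intro x
    have h3 : Real.exp 1 ≤ 3 := by
      have := Real.exp_one_lt_d9
      linarith
    exact Set.mem_Ici.mpr (le_trans h3 (hv3 x))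
  have hjensen : ∑ x, (P x : ℝ) * (Real.log (v x))^2 ≤ (Real.log η)^2 := by
    have := concave_log_sq.le_map_sum (t := univ) (w := fun x => (P x : ℝ)) (p := v)
      (fun x _ => (hp x).le) hsum1 (fun x _ => hvmem x)
    simp only [smul_eq_mul] at this
    rwa [hpv] at this
  have hW : W ≤ 4 * (Real.log η)^2 := by
    have hpt : ∀ x : X, (Real.log (P x))^2 ≤ 4 * (Real.log (v x))^2 := by
      intro x
      have ha : 0 < (P x : ℝ) ^ (1/2:ℝ) := Real.rpow_pos_of_pos (hp x) _
      have hvx : 0 < v x := lt_of_lt_of_le (by norm_num) (hv3 x)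
      have hla : Real.log ((P x : ℝ) ^ (1/2:ℝ)) = (1/2) * Real.log (P x) := by
        rw [Real.log_rpow (hp x)]
      have hv1 : (P x : ℝ)^(1/2:ℝ) ≤ v x := by
        have : 0 < ((P x : ℝ) ^ (1/2:ℝ))⁻¹ := inv_pos.mpr ha
        simp only [hvdef]
        linarith
      have hv2 : ((P x : ℝ)^(1/2:ℝ))⁻¹ ≤ v x := by
        simp only [hvdef]
        linarith
      have h_up : Real.log (P x) ≤ 2 * Real.log (v x) := by
        have := (Real.log_le_log_iff ha hvx).mpr hv1
        rw [hla] at this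
        linarith
      have h_dn : -(2 * Real.log (v x)) ≤ Real.log (P x) := by
        have := (Real.log_le_log_iff (inv_pos.mpr ha) hvx).mpr hv2
        rw [Real.log_inv, hla] at this
        linarith
      have := sq_le_sq' h_dn h_up
      nlinarith [this]
    calc W ≤ ∑ x, (P x : ℝ) * (4 * (Real.log (v x))^2) := by
          rw [hWdef]
          exact Finset.sum_le_sum (fun x _ => mul_le_mul_of_nonneg_left (hpt x) (hp x).le)
      _ = 4 * ∑ x, (P x : ℝ) * (Real.log (v x))^2 := by
          rw [Finset.mul_sum]
          exact Finset.sum_congr rfl (fun x _ => by ring)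
      _ ≤ 4 * (Real.log η)^2 := by linarith [hjensen]
  -- pointwise quadratic upper bound on p^α and summation
  have hSa_le : Sa ≤ 1 + t*A + t^2/2*W := by
    have hq : ∀ x : X, (P x:ℝ)^α ≤ (P x:ℝ) + t*((P x:ℝ) * Real.log (P x))
        + t^2/2*((P x:ℝ) * (Real.log (P x))^2) := by
      intro x
      have hlp : Real.log (P x) ≤ 0 := Real.log_nonpos (hp x).le (hple x)
      have hu : t * Real.log (P x) ≤ 0 := mul_nonpos_of_nonneg_of_nonpos ht.le hlp
      have he := exp_le_quad hu
      have hrw : (P x:ℝ)^α = (P x:ℝ) * Real.exp (t * Real.log (P x)) := by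
        have h1 : (P x:ℝ) * Real.exp (t * Real.log (P x))
            = Real.exp (Real.log (P x) + t * Real.log (P x)) := by
          rw [Real.exp_add, Real.exp_log (hp x)]
        rw [Real.rpow_def_of_pos (hp x), h1]
        congr 1
        simp only [htdef]
        ring
      rw [hrw]
      have h2 := mul_le_mul_of_nonneg_left he (hp x).le
      refine le_trans h2 (le_of_eq ?_)
      ring
    calc Sa ≤ ∑ x, ((P x:ℝ) + t*((P x:ℝ) * Real.log (P x))
          + t^2/2*((P x:ℝ) * (Real.log (P x))^2)) := by
          rw [hSadef]
          exact Finset.sum_le_sum (fun x _ => hq x)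
      _ = 1 + t*A + t^2/2*W := by
          rw [Finset.sum_add_distrib, Finset.sum_add_distrib, hsum1, ← Finset.mul_sum,
            ← Finset.mul_sum, hAdef, hWdef]
  have hW0 : 0 ≤ W := by
    rw [hWdef]
    exact Finset.sum_nonneg (fun x _ => mul_nonneg (hp x).le (sq_nonneg _))
  clear_value S3 S1 Sa t A W
  have hlogSa : Real.log Sa ≤ t*A + 2*t^2*(Real.log η)^2 := by
    have h1 := Real.log_le_sub_one_of_pos hSa
    have h2 : t^2/2 * W ≤ t^2/2 * (4 * (Real.log η)^2) :=
      mul_le_mul_of_nonneg_left hW (by positivity)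
    linarith
  -- final arithmetic
  have hc : 0 < Real.log 2 := Real.log_pos one_lt_two
  have hc1 : Real.log 2 < 1 := by
    have := Real.log_two_lt_d9
    linarith
  rw [ge_iff_le]
  simp only [Real.logb]
  have hsumdiv : ∑ x, (P x:ℝ) * (Real.log (P x) / Real.log 2) = A / Real.log 2 := by
    rw [hAdef, Finset.sum_div]
    exact Finset.sum_congr rfl (fun x _ => (mul_div_assoc _ _ _).symm)
  rw [hsumdiv]
  have hL1 : (1:ℝ)/(1-α) * (Real.log Sa / Real.log 2) = -Real.log Sa / (t * Real.log 2) := by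
    have h1α : 1 - α = -t := by simp only [htdef]; ring
    rw [h1α]
    field_simp
  rw [hL1, le_div_iff₀ (by positivity : (0:ℝ) < t * Real.log 2)]
  have expand : (-(A / Real.log 2) - 4*t*((Real.log η)/(Real.log 2))^2) * (t * Real.log 2)
      = -(t*A) - 4*t^2*(Real.log η)^2/Real.log 2 := by
    field_simp
  rw [expand]
  have h24 : 2*t^2*(Real.log η)^2 ≤ 4*t^2*(Real.log η)^2/Real.log 2 := by
    rw [le_div_iff₀ hc]
    nlinarith [sq_nonneg (t*(Real.log η))]
  linarith [hlogSa, h24]
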